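/- Consider the discrete-time LTI system x_{t+1} = A x_t + B u_t, y_t = C x_t + D u_t with (A,B) controllable and (A,C) observable. Suppose {u^d_k, y^d_k}_{k=0}^{N-1} is a trajectory of the system and u^d is persistently exciting of order 2n+1. Then an input-output pair (u^s, y^s) ∈ ℝ^m × ℝ^p is an equilibrium of the system if and only if there exists ν ∈ ℝ^{N-n} such that H_{n+1}(u^d) ν = 1_{n+1} ⊗ u^s and H_{n+1}(y^d) ν = 1_{n+1} ⊗ y^s, i.e., if and only if the stacked vector (1_{n+1} ⊗ u^s, 1_{n+1} ⊗ y^s) lies in the column space of the matrix [H_{n+1}(u^d); H_{n+1}(y^d)] (Lemma 1, data-driven characterization of the steady-state manifold). -/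

import Mathlib

/-- A sequence `{u_k, y_k}_{k=0}^{L-1}` is a trajectory of the discrete-time LTI system
`x_{t+1} = A x_t + B u_t`, `y_t = C x_t + D u_t`. -/
def IsTraj {n m p : ℕ} (A : Matrix (Fin n) (Fin n) ℝ) (B : Matrix (Fin n) (Fin m) ℝ)
    (C : Matrix (Fin p) (Fin n) ℝ) (D : Matrix (Fin p) (Fin m) ℝ)
    (L : ℕ) (u : ℕ → Fin m → ℝ) (y : ℕ → Fin p → ℝ) : Prop :=
  ∃ x : ℕ → Fin n → ℝ,
    (∀ k, k + 1 < L → x (k + 1) = A.mulVec (x k) + B.mulVec (u k)) ∧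
    (∀ k, k < L → y k = C.mulVec (x k) + D.mulVec (u k))

/-- `(u^s, y^s)` is an equilibrium of the system iff the constant sequence of length `n+1`
consisting of `(u^s, y^s)` is a trajectory of the system. -/
def IsEquilibrium {n m p : ℕ} (A : Matrix (Fin n) (Fin n) ℝ) (B : Matrix (Fin n) (Fin m) ℝ)
    (C : Matrix (Fin p) (Fin n) ℝ) (D : Matrix (Fin p) (Fin m) ℝ)
    (us : Fin m → ℝ) (ys : Fin p → ℝ) : Prop :=
  IsTraj A B C D (n + 1) (fun _ => us) (fun _ => ys)

/-- Hankel matrix of depth `L` of a sequence `{z_k}_{k=0}^{N-1}` in `ℝ^q`. -/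
def hankel {q : ℕ} (L N : ℕ) (z : ℕ → Fin q → ℝ) :
    Matrix (Fin L × Fin q) (Fin (N - L + 1)) ℝ :=
  fun ia j => z (ia.1.val + j.val) ia.2

/-- `k`-step controllability matrix `[B AB … A^{k-1}B]`. -/
def ctrbMat {n m : ℕ} (A : Matrix (Fin n) (Fin n) ℝ) (B : Matrix (Fin n) (Fin m) ℝ)
    (k : ℕ) : Matrix (Fin n) (Fin k × Fin m) ℝ :=
  fun i jc => (A ^ (jc.1 : ℕ) * B) i jc.2

/-- `k`-step observability matrix `[C; CA; …; CA^{k-1}]`. -/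
def obsvMat {n p : ℕ} (A : Matrix (Fin n) (Fin n) ℝ) (C : Matrix (Fin p) (Fin n) ℝ)
    (k : ℕ) : Matrix (Fin k × Fin p) (Fin n) ℝ :=
  fun ij l => (C * A ^ (ij.1 : ℕ)) ij.2 l

open Matrix Finset

section Helpers

lemma full_rank_iff_vecMul_inj {r c : Type*} [Fintype r] [Fintype c] [DecidableEq r]
    (M : Matrix r c ℝ) :
    M.rank = Fintype.card r ↔ ∀ w : r → ℝ, M.vecMul w = 0 → w = 0 := by
  constructor
  · intro h w hw
    have ht : Mᵀ.rank = Fintype.card r := by rw [Matrix.rank_transpose]; exact h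
    have hker : LinearMap.ker Mᵀ.mulVecLin = ⊥ := by
      have h2 := LinearMap.finrank_range_add_finrank_ker Mᵀ.mulVecLin
      have h3 : Module.finrank ℝ (LinearMap.range Mᵀ.mulVecLin) = Fintype.card r := ht
      rw [h3, Module.finrank_fintype_fun_eq_card] at h2
      have : Module.finrank ℝ (LinearMap.ker Mᵀ.mulVecLin) = 0 := by omega
      exact Submodule.finrank_eq_zero.mp this
    have hz : Mᵀ.mulVecLin w = 0 := by
      rw [Matrix.mulVecLin_apply, Matrix.mulVec_transpose]; exact hw
    exact (LinearMap.ker_eq_bot.mp hker) (by simpa using hz)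
  · intro h
    have hker : LinearMap.ker Mᵀ.mulVecLin = ⊥ := by
      rw [LinearMap.ker_eq_bot']
      intro w hw
      exact h w (by rw [← Matrix.mulVec_transpose]; exact hw)
    have ht : Mᵀ.rank = Fintype.card r := by
      have h2 := LinearMap.finrank_range_add_finrank_ker Mᵀ.mulVecLin
      rw [hker, finrank_bot, Module.finrank_fintype_fun_eq_card] at h2
      simpa [Matrix.rank] using h2
    rw [← Matrix.rank_transpose]; exact ht

lemma surj_of_vecMul_inj {r c : Type*} [Fintype r] [Fintype c] [DecidableEq r]
    (M : Matrix r c ℝ) (h : ∀ w : r → ℝ, M.vecMul w = 0 → w = 0) :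
    ∀ v : r → ℝ, ∃ ν, M.mulVec ν = v := by
  have hr : M.rank = Fintype.card r := (full_rank_iff_vecMul_inj M).mpr h
  have htop : LinearMap.range M.mulVecLin = ⊤ := by
    apply Submodule.eq_top_of_finrank_eq
    rw [Module.finrank_fintype_fun_eq_card]; exact hr
  intro v
  obtain ⟨ν, hν⟩ := (LinearMap.range_eq_top.mp htop) v
  exact ⟨ν, hν⟩

lemma dot_sum_right {q : ℕ} (k : ℕ) (v : Fin q → ℝ) (w : ℕ → Fin q → ℝ) :
    v ⬝ᵥ (∑ i ∈ range k, w i) = ∑ i ∈ range k, v ⬝ᵥ w i := by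
  simp only [dotProduct, Finset.sum_apply, Finset.mul_sum]
  exact Finset.sum_comm

lemma sum_matrix_mulVec {a b : ℕ} (k : ℕ) (M : ℕ → Matrix (Fin a) (Fin b) ℝ) (x : Fin b → ℝ) :
    (∑ i ∈ range k, M i) *ᵥ x = ∑ i ∈ range k, (M i) *ᵥ x := by
  funext l
  simp only [Matrix.mulVec, dotProduct, Matrix.sum_apply, Finset.sum_apply, Finset.sum_mul]
  exact Finset.sum_comm

lemma mulVec_comb {a b : ℕ} {ι : Type*} [Fintype ι] (M : Matrix (Fin a) (Fin b) ℝ)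
    (ν : ι → ℝ) (v : ι → Fin b → ℝ) (l : Fin a) :
    (M *ᵥ (fun cc => ∑ j, ν j * v j cc)) l = ∑ j, ν j * (M *ᵥ v j) l := by
  simp only [Matrix.mulVec, dotProduct, Finset.mul_sum]
  rw [Finset.sum_comm]
  apply Finset.sum_congr rfl
  intro j _
  apply Finset.sum_congr rfl
  intro i _
  ring

lemma sum_shift' (k L M : ℕ) (hk : k + L ≤ M) (g : ℕ → ℝ) :
    ∑ s ∈ range M, (if k ≤ s ∧ s - k < L then g s else 0) = ∑ i ∈ range L, g (i + k) := by
  rw [← Finset.sum_filter]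
  have himg : (range M).filter (fun s => k ≤ s ∧ s - k < L) = (range L).image (fun i => i + k) := by
    ext s
    simp only [Finset.mem_filter, Finset.mem_range, Finset.mem_image]
    constructor
    · rintro ⟨hs, hks, hskL⟩; exact ⟨s - k, hskL, by omega⟩
    · rintro ⟨i, hi, rfl⟩; omega
  rw [himg, Finset.sum_image (by intro x _ y _ hxy; simp only at hxy; omega)]

lemma sum_cut (k M : ℕ) (hk : k ≤ M) (g : ℕ → ℝ) :
    ∑ s ∈ range M, (if s < k then g s else 0) = ∑ s ∈ range k, g s := by
  rw [← Finset.sum_filter]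
  congr 1
  ext s
  simp only [Finset.mem_filter, Finset.mem_range]
  omega

lemma state_expand {n m : ℕ} (A : Matrix (Fin n) (Fin n) ℝ) (B : Matrix (Fin n) (Fin m) ℝ)
    (Nn : ℕ) (u : ℕ → Fin m → ℝ) (x : ℕ → Fin n → ℝ)
    (hx : ∀ k, k + 1 < Nn → x (k + 1) = A *ᵥ x k + B *ᵥ u k) :
    ∀ k j, k + j < Nn →
      x (k + j) = (A ^ k) *ᵥ x j + ∑ i ∈ range k, ((A ^ (k - 1 - i) * B) *ᵥ u (i + j)) := by
  intro k
  induction k with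
  | zero => intro j hj; simp [Matrix.one_mulVec]
  | succ k ih =>
    intro j hj
    have h1 : x (k + 1 + j) = A *ᵥ x (k + j) + B *ᵥ u (k + j) := by
      rw [show k + 1 + j = (k + j) + 1 by omega]
      exact hx (k + j) (by omega)
    rw [h1, ih j (by omega), Matrix.mulVec_add]
    have h2 : A *ᵥ ((A ^ k) *ᵥ x j) = (A ^ (k + 1)) *ᵥ x j := by
      rw [Matrix.mulVec_mulVec, ← pow_succ']
    have h3 : A *ᵥ (∑ i ∈ range k, ((A ^ (k - 1 - i) * B) *ᵥ u (i + j)))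
        = ∑ i ∈ range k, ((A ^ (k + 1 - 1 - i) * B) *ᵥ u (i + j)) := by
      have hswap : ∀ l : Fin n, (A *ᵥ (∑ i ∈ range k, ((A ^ (k - 1 - i) * B) *ᵥ u (i + j)))) l
          = ∑ i ∈ range k, (A *ᵥ ((A ^ (k - 1 - i) * B) *ᵥ u (i + j))) l := by
        intro l
        simp only [Matrix.mulVec, dotProduct, Finset.sum_apply, Finset.mul_sum]
        exact Finset.sum_comm
      funext l
      rw [hswap l, Finset.sum_apply]
      apply Finset.sum_congr rfl
      intro i hi
      rw [Finset.mem_range] at hi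
      rw [Matrix.mulVec_mulVec, ← Matrix.mul_assoc, ← pow_succ',
        show k - 1 - i + 1 = k + 1 - 1 - i by omega]
    rw [h2, h3, Finset.sum_range_succ]
    rw [show k + 1 - 1 - k = 0 by omega, pow_zero, Matrix.one_mul]
    abel

lemma cayley_coeffs {n : ℕ} (A : Matrix (Fin n) (Fin n) ℝ) :
    ∃ c : ℕ → ℝ, c n = 1 ∧ ∑ k ∈ range (n + 1), c k • A ^ k = 0 := by
  have h1 : A.charpoly.natDegree = n := by
    rw [Matrix.charpoly_natDegree_eq_dim, Fintype.card_fin]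
  refine ⟨fun k => A.charpoly.coeff k, ?_, ?_⟩
  · have h2 := A.charpoly_monic
    rw [Polynomial.Monic, Polynomial.leadingCoeff, h1] at h2
    exact h2
  · have h2 := Polynomial.aeval_eq_sum_range (p := A.charpoly) A
    rw [Matrix.aeval_self_charpoly, h1] at h2
    exact h2.symm

lemma pe_seq {m n N : ℕ} (hN : 2 * n + 1 ≤ N) (ud : ℕ → Fin m → ℝ)
    (hPE : ∀ w : Fin (2 * n + 1) × Fin m → ℝ,
      Matrix.vecMul w (hankel (2 * n + 1) N ud) = 0 → w = 0)
    (ζ : ℕ → Fin m → ℝ)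
    (h : ∀ j, j + (2 * n + 1) ≤ N →
      ∑ s ∈ range (2 * n + 1), (∑ a, ζ s a * ud (s + j) a) = 0) :
    ∀ s, s < 2 * n + 1 → ζ s = 0 := by
  have hz := hPE (fun ia => ζ ia.1 ia.2) ?_
  · intro s hs; funext a; exact congrFun hz (⟨s, hs⟩, a)
  · funext j
    have hj : (j : ℕ) + (2 * n + 1) ≤ N := by have := j.isLt; omega
    have h0 := h j hj
    show (fun ia : Fin (2 * n + 1) × Fin m => ζ ia.1 ia.2) ⬝ᵥ
      (fun ia => hankel (2 * n + 1) N ud ia j) = 0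
    rw [dotProduct, Fintype.sum_prod_type]
    rw [← Fin.sum_univ_eq_sum_range (fun s => ∑ a, ζ s a * ud (s + (j : ℕ)) a) (2 * n + 1)] at h0
    exact h0



section Part2
variable {n m : ℕ}

noncomputable def zeta (c : ℕ → ℝ) (ξ : ℕ → Fin m → ℝ) (η : Fin n → ℝ)
    (A : Matrix (Fin n) (Fin n) ℝ) (B : Matrix (Fin n) (Fin m) ℝ) : ℕ → Fin m → ℝ :=
  fun s a =>
    (∑ k ∈ range (n+1), if k ≤ s ∧ s - k < n + 1 then c k * ξ (s - k) a else 0)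
    + (∑ k ∈ range (n+1), if s < k then c k * (Matrix.vecMul η (A ^ (k - 1 - s) * B)) a else 0)

lemma xi_zero {A : Matrix (Fin n) (Fin n) ℝ} {B : Matrix (Fin n) (Fin m) ℝ}
    (c : ℕ → ℝ) (ξ : ℕ → Fin m → ℝ) (η : Fin n → ℝ) (hcn : c n = 1)
    (h0 : ∀ s, s < 2*n+1 → zeta c ξ η A B s = 0) :
    ∀ i, i ≤ n → ξ i = 0 := by
  have key : ∀ d, d ≤ n → ξ (n - d) = 0 := by
    intro d
    induction d using Nat.strong_induction_on with
    | _ d ih =>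
      intro hd
      funext a
      have hs := congrFun (h0 (n + (n - d)) (by omega)) a
      simp only [zeta, Pi.zero_apply] at hs
      have h2nd : (∑ k ∈ range (n+1), if n + (n - d) < k then
          c k * (Matrix.vecMul η (A ^ (k - 1 - (n + (n - d))) * B)) a else 0) = 0 := by
        apply Finset.sum_eq_zero
        intro k hk
        rw [Finset.mem_range] at hk
        rw [if_neg (by omega)]
      have h1st : (∑ k ∈ range (n+1), if k ≤ n + (n - d) ∧ n + (n - d) - k < n + 1 then
          c k * ξ (n + (n - d) - k) a else 0) = ξ (n - d) a := by
        have hsingle : (∑ k ∈ range (n+1), if k ≤ n + (n - d) ∧ n + (n - d) - k < n + 1 then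
            c k * ξ (n + (n - d) - k) a else 0)
            = (if n ≤ n + (n - d) ∧ n + (n - d) - n < n + 1 then
                c n * ξ (n + (n - d) - n) a else 0) := by
          apply Finset.sum_eq_single
          · intro k hk hkn
            rw [Finset.mem_range] at hk
            by_cases hc : k ≤ n + (n - d) ∧ n + (n - d) - k < n + 1
            · rw [if_pos hc]
              have hd' : n - (n + (n - d) - k) < d := by omega
              have hz := ih (n - (n + (n - d) - k)) hd' (by omega)
              rw [show n - (n - (n + (n - d) - k)) = n + (n - d) - k by omega] at hz
              rw [show ξ (n + (n - d) - k) a = 0 from congrFun hz a, mul_zero]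
            · rw [if_neg hc]
          · intro hn; exact absurd (Finset.self_mem_range_succ n) hn
        rw [hsingle, if_pos (by omega), show n + (n - d) - n = n - d by omega, hcn, one_mul]
      rw [h1st, h2nd, add_zero] at hs
      exact hs
  intro i hi
  have := key (n - i) (by omega)
  rwa [show n - (n - i) = i by omega] at this

lemma etaB_zero {A : Matrix (Fin n) (Fin n) ℝ} {B : Matrix (Fin n) (Fin m) ℝ}
    (c : ℕ → ℝ) (ξ : ℕ → Fin m → ℝ) (η : Fin n → ℝ) (hcn : c n = 1)
    (h0 : ∀ s, s < 2*n+1 → zeta c ξ η A B s = 0)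
    (hξ : ∀ i, i ≤ n → ξ i = 0) :
    ∀ r, r < n → Matrix.vecMul η (A ^ r * B) = 0 := by
  intro r
  induction r using Nat.strong_induction_on with
  | _ r ih =>
    intro hr
    funext a
    have hs := congrFun (h0 (n - 1 - r) (by omega)) a
    simp only [zeta, Pi.zero_apply] at hs
    have h1st : (∑ k ∈ range (n+1), if k ≤ n - 1 - r ∧ n - 1 - r - k < n + 1 then
        c k * ξ (n - 1 - r - k) a else 0) = 0 := by
      apply Finset.sum_eq_zero
      intro k hk
      by_cases hc : k ≤ n - 1 - r ∧ n - 1 - r - k < n + 1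
      · rw [if_pos hc, show ξ (n - 1 - r - k) a = 0 from congrFun (hξ _ (by omega)) a, mul_zero]
      · rw [if_neg hc]
    have h2nd : (∑ k ∈ range (n+1), if n - 1 - r < k then
        c k * (Matrix.vecMul η (A ^ (k - 1 - (n - 1 - r)) * B)) a else 0)
        = (Matrix.vecMul η (A ^ r * B)) a := by
      have hsingle : (∑ k ∈ range (n+1), if n - 1 - r < k then
          c k * (Matrix.vecMul η (A ^ (k - 1 - (n - 1 - r)) * B)) a else 0)
          = (if n - 1 - r < n then
              c n * (Matrix.vecMul η (A ^ (n - 1 - (n - 1 - r)) * B)) a else 0) := by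
        apply Finset.sum_eq_single
        · intro k hk hkn
          rw [Finset.mem_range] at hk
          by_cases hc : n - 1 - r < k
          · rw [if_pos hc]
            have he : k - 1 - (n - 1 - r) < r := by omega
            rw [show (Matrix.vecMul η (A ^ (k - 1 - (n - 1 - r)) * B)) a = 0 from
              congrFun (ih _ he (by omega)) a, mul_zero]
          · rw [if_neg hc]
        · intro hn; exact absurd (Finset.self_mem_range_succ n) hn
      rw [hsingle, if_pos (by omega), show n - 1 - (n - 1 - r) = r by omega, hcn, one_mul]
    rw [h1st, h2nd, zero_add] at hs
    exact hs

end Part2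

open Matrix Finset
lemma zeta_vanish {n m N : ℕ} (hN : 2*n+1 ≤ N)
    (A : Matrix (Fin n) (Fin n) ℝ) (B : Matrix (Fin n) (Fin m) ℝ)
    (ud : ℕ → Fin m → ℝ) (xd : ℕ → Fin n → ℝ)
    (hxd : ∀ k, k + 1 < N → xd (k+1) = A *ᵥ xd k + B *ᵥ ud k)
    (c : ℕ → ℝ) (hcA : ∑ k ∈ range (n+1), c k • A ^ k = 0)
    (ξ : ℕ → Fin m → ℝ) (η : Fin n → ℝ)
    (hstar : ∀ j, j + (n+1) ≤ N →
      (∑ i ∈ range (n+1), ∑ a, ξ i a * ud (i + j) a) + (∑ l, η l * xd j l) = 0) :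
    ∀ j, j + (2*n+1) ≤ N →
      ∑ s ∈ range (2*n+1), (∑ a, zeta c ξ η A B s a * ud (s + j) a) = 0 := by
  intro j hj
  have hsplit : ∑ s ∈ range (2*n+1), ∑ a, zeta c ξ η A B s a * ud (s + j) a
      = (∑ s ∈ range (2*n+1), ∑ k ∈ range (n+1),
          if k ≤ s ∧ s - k < n + 1 then c k * ∑ a, ξ (s - k) a * ud (s + j) a else 0)
      + (∑ s ∈ range (2*n+1), ∑ k ∈ range (n+1),
          if s < k then c k * ∑ a, (Matrix.vecMul η (A ^ (k - 1 - s) * B)) a * ud (s + j) a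
          else 0) := by
    rw [← Finset.sum_add_distrib]
    apply Finset.sum_congr rfl
    intro s _
    simp only [zeta, add_mul, Finset.sum_mul, ite_mul, zero_mul, Finset.sum_add_distrib]
    congr 1
    · rw [Finset.sum_comm]
      apply Finset.sum_congr rfl
      intro k _
      by_cases hP : k ≤ s ∧ s - k < n + 1
      · simp only [if_pos hP, Finset.mul_sum]
        apply Finset.sum_congr rfl; intro a _; ring
      · simp only [if_neg hP, Finset.sum_const_zero]
    · rw [Finset.sum_comm]
      apply Finset.sum_congr rfl
      intro k _
      by_cases hP : s < k
      · simp only [if_pos hP, Finset.mul_sum]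
        apply Finset.sum_congr rfl; intro a _; ring
      · simp [if_neg hP]
  have hT1 : (∑ s ∈ range (2*n+1), ∑ k ∈ range (n+1),
        if k ≤ s ∧ s - k < n + 1 then c k * ∑ a, ξ (s - k) a * ud (s + j) a else 0)
      = ∑ k ∈ range (n+1), c k * ∑ i ∈ range (n+1), ∑ a, ξ i a * ud (i + (k + j)) a := by
    rw [Finset.sum_comm]
    apply Finset.sum_congr rfl
    intro k hk
    rw [Finset.mem_range] at hk
    rw [sum_shift' k (n+1) (2*n+1) (by omega)
      (fun s => c k * ∑ a, ξ (s - k) a * ud (s + j) a)]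
    rw [Finset.mul_sum]
    apply Finset.sum_congr rfl
    intro i _
    simp only [Nat.add_sub_cancel]
    rw [Nat.add_assoc]
  have hT2 : (∑ s ∈ range (2*n+1), ∑ k ∈ range (n+1),
        if s < k then c k * ∑ a, (Matrix.vecMul η (A ^ (k - 1 - s) * B)) a * ud (s + j) a else 0)
      = ∑ k ∈ range (n+1), c k * ∑ i ∈ range k,
          ∑ a, (Matrix.vecMul η (A ^ (k - 1 - i) * B)) a * ud (i + j) a := by
    rw [Finset.sum_comm]
    apply Finset.sum_congr rfl
    intro k hk
    rw [Finset.mem_range] at hk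
    rw [sum_cut k (2*n+1) (by omega)
      (fun s => c k * ∑ a, (Matrix.vecMul η (A ^ (k - 1 - s) * B)) a * ud (s + j) a)]
    rw [← Finset.mul_sum]
  have hdot : ∀ k, k ≤ n → (∑ l, η l * xd (k + j) l)
      = (∑ l, η l * ((A ^ k) *ᵥ xd j) l)
        + ∑ i ∈ range k, ∑ a, (Matrix.vecMul η (A ^ (k - 1 - i) * B)) a * ud (i + j) a := by
    intro k hk
    have hkjN : k + j < N := by omega
    show η ⬝ᵥ xd (k + j) = _
    rw [state_expand A B N ud xd hxd k j hkjN]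
    rw [dotProduct_add, dot_sum_right]
    congr 1
    apply Finset.sum_congr rfl
    intro i _
    rw [Matrix.dotProduct_mulVec]
    rfl
  have hch : ∑ k ∈ range (n+1), c k * (∑ l, η l * ((A ^ k) *ᵥ xd j) l) = 0 := by
    have hterm : ∀ k ∈ range (n+1), c k * (∑ l, η l * ((A ^ k) *ᵥ xd j) l)
        = η ⬝ᵥ ((c k • A ^ k) *ᵥ xd j) := by
      intro k _
      rw [Matrix.smul_mulVec, dotProduct_smul, smul_eq_mul]
      rfl
    rw [Finset.sum_congr rfl hterm, ← dot_sum_right, ← sum_matrix_mulVec, hcA,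
      Matrix.zero_mulVec, dotProduct_zero]
  have hterm2 : ∀ k ∈ range (n+1),
      c k * (∑ i ∈ range (n+1), ∑ a, ξ i a * ud (i + (k + j)) a)
      + c k * (∑ i ∈ range k, ∑ a, (Matrix.vecMul η (A ^ (k - 1 - i) * B)) a * ud (i + j) a)
      = - (c k * (∑ l, η l * ((A ^ k) *ᵥ xd j) l)) := by
    intro k hk
    rw [Finset.mem_range] at hk
    have h1 := hstar (k + j) (by omega)
    rw [hdot k (by omega)] at h1
    linear_combination (c k) * h1
  rw [hsplit, hT1, hT2, ← Finset.sum_add_distrib, Finset.sum_congr rfl hterm2,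
    Finset.sum_neg_distrib, hch, neg_zero]


open Matrix Finset in
private def stackedMat {n m : ℕ} (N : ℕ) (ud : ℕ → Fin m → ℝ) (xd : ℕ → Fin n → ℝ) :
    Matrix ((Fin (n + 1) × Fin m) ⊕ Fin n) (Fin (N - (n + 1) + 1)) ℝ :=
  fun r j => Sum.elim (fun ia : Fin (n + 1) × Fin m => ud ((ia.1 : ℕ) + (j : ℕ)) ia.2)
    (fun l : Fin n => xd (j : ℕ) l) r

open Matrix Finset in
/-- **Data-driven characterization of the steady-state manifold (Lemma 1).**
If `(A,B)` is controllable, `(A,C)` is observable, `{u^d_k, y^d_k}_{k=0}^{N-1}` is a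
trajectory of the system and `u^d` is persistently exciting of order `2n+1`, then
`(u^s, y^s)` is an equilibrium of the system if and only if there exists `ν ∈ ℝ^{N-n}` with
`H_{n+1}(u^d) ν = 1_{n+1} ⊗ u^s` and `H_{n+1}(y^d) ν = 1_{n+1} ⊗ y^s`. -/
theorem steady_state_manifold {n m p N : ℕ} (hN : 2 * n + 1 ≤ N)
    (A : Matrix (Fin n) (Fin n) ℝ) (B : Matrix (Fin n) (Fin m) ℝ)
    (C : Matrix (Fin p) (Fin n) ℝ) (D : Matrix (Fin p) (Fin m) ℝ)
    (hctrb : (ctrbMat A B n).rank = n) (hobsv : (obsvMat A C n).rank = n)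
    (ud : ℕ → Fin m → ℝ) (yd : ℕ → Fin p → ℝ)
    (hdata : IsTraj A B C D N ud yd)
    (hpe : (hankel (2 * n + 1) N ud).rank = m * (2 * n + 1))
    (us : Fin m → ℝ) (ys : Fin p → ℝ) :
    IsEquilibrium A B C D us ys ↔
      ∃ ν : Fin (N - (n + 1) + 1) → ℝ,
        (∀ i : Fin (n + 1), ∀ a, (hankel (n + 1) N ud).mulVec ν (i, a) = us a) ∧
        (∀ i : Fin (n + 1), ∀ a, (hankel (n + 1) N yd).mulVec ν (i, a) = ys a) := by
  classical
  obtain ⟨xd, hxd, hyd⟩ := hdata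
  obtain ⟨c, hcn, hcA⟩ := cayley_coeffs A
  have hPE : ∀ w : Fin (2 * n + 1) × Fin m → ℝ,
      Matrix.vecMul w (hankel (2 * n + 1) N ud) = 0 → w = 0 := by
    apply (full_rank_iff_vecMul_inj _).mp
    rw [hpe, Fintype.card_prod, Fintype.card_fin, Fintype.card_fin, mul_comm]
  have hCtrb : ∀ w : Fin n → ℝ, Matrix.vecMul w (ctrbMat A B n) = 0 → w = 0 := by
    apply (full_rank_iff_vecMul_inj _).mp
    rw [hctrb, Fintype.card_fin]
  have hMnull : ∀ w, Matrix.vecMul w (stackedMat N ud xd) = 0 → w = 0 := by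
    intro w hw
    set ξ : ℕ → Fin m → ℝ :=
      fun i a => if h : i < n + 1 then w (Sum.inl (⟨i, h⟩, a)) else 0 with hξdef
    set η : Fin n → ℝ := fun l => w (Sum.inr l) with hηdef
    have hstar : ∀ j, j + (n + 1) ≤ N →
        (∑ i ∈ range (n + 1), ∑ a, ξ i a * ud (i + j) a) + (∑ l, η l * xd j l) = 0 := by
      intro j hj
      have hjlt : j < N - (n + 1) + 1 := by omega
      have hcw := congrFun hw ⟨j, hjlt⟩
      simp only [Matrix.vecMul, dotProduct, stackedMat, Pi.zero_apply,
        Fintype.sum_sum_type, Fintype.sum_prod_type, Sum.elim_inl, Sum.elim_inr] at hcw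
      rw [← Fin.sum_univ_eq_sum_range (fun i => ∑ a, ξ i a * ud (i + j) a) (n + 1)]
      have hfin : (∑ i : Fin (n + 1), ∑ a, ξ (i : ℕ) a * ud ((i : ℕ) + j) a)
          = ∑ i : Fin (n + 1), ∑ a : Fin m, w (Sum.inl (i, a)) * ud ((i : ℕ) + j) a := by
        apply Finset.sum_congr rfl
        intro i _
        apply Finset.sum_congr rfl
        intro a _
        simp only [hξdef]
        rw [dif_pos i.isLt]
      rw [hfin]
      exact hcw
    have hζ0 := pe_seq hN ud hPE (zeta c ξ η A B)
      (zeta_vanish hN A B ud xd hxd c hcA ξ η hstar)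
    have hξ0 := xi_zero c ξ η hcn hζ0
    have hηB := etaB_zero c ξ η hcn hζ0 hξ0
    have hη0 : η = 0 := by
      apply hCtrb
      funext ka
      show ∑ l, η l * ctrbMat A B n l ka = 0
      exact congrFun (hηB (ka.1 : ℕ) ka.1.isLt) ka.2
    funext r
    cases r with
    | inl ia =>
      have h1 := congrFun (hξ0 (ia.1 : ℕ) (by have := ia.1.isLt; omega)) ia.2
      simp only [hξdef] at h1
      rw [dif_pos ia.1.isLt] at h1
      exact h1
    | inr l => exact congrFun hη0 l
  have hsurj := surj_of_vecMul_inj _ hMnull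
  constructor
  · rintro ⟨xe, hxe, hye⟩
    obtain ⟨ν, hν⟩ := hsurj (Sum.elim (fun ia : Fin (n + 1) × Fin m => us ia.2) (xe 0))
    have huν : ∀ k : ℕ, k < n + 1 → ∀ b, (∑ j, ν j * ud (k + (j : ℕ)) b) = us b := by
      intro k hk b
      have h1 : (∑ j : Fin (N - (n + 1) + 1), ud (k + (j : ℕ)) b * ν j) = us b := congrFun hν (Sum.inl (⟨k, hk⟩, b))
      rw [← h1]
      apply Finset.sum_congr rfl
      intro j _
      ring
    refine ⟨ν, ?_, ?_⟩
    · intro i a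
      exact congrFun hν (Sum.inl (i, a))
    · intro i a
      have hz0 : (fun l => ∑ j, ν j * xd (0 + (j : ℕ)) l) = xe 0 := by
        funext l
        have h1 : (∑ j : Fin (N - (n + 1) + 1), xd ((j : ℕ)) l * ν j) = xe 0 l := congrFun hν (Sum.inr l)
        rw [← h1]
        apply Finset.sum_congr rfl
        intro j _
        rw [Nat.zero_add]
        ring
      have hzrec : ∀ k, k < n →
          (fun l => ∑ j, ν j * xd (k + 1 + (j : ℕ)) l)
          = A *ᵥ (fun l => ∑ j, ν j * xd (k + (j : ℕ)) l) + B *ᵥ us := by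
        intro k hk
        funext l
        have hstep : ∀ j : Fin (N - (n + 1) + 1),
            xd (k + 1 + (j : ℕ)) = A *ᵥ xd (k + (j : ℕ)) + B *ᵥ ud (k + (j : ℕ)) := by
          intro j
          have hjv : (j : ℕ) < N - (n + 1) + 1 := j.isLt
          rw [show k + 1 + (j : ℕ) = (k + (j : ℕ)) + 1 by omega]
          exact hxd _ (by omega)
        calc (∑ j, ν j * xd (k + 1 + (j : ℕ)) l)
            = ∑ j, (ν j * (A *ᵥ xd (k + (j : ℕ))) l + ν j * (B *ᵥ ud (k + (j : ℕ))) l) := by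
              apply Finset.sum_congr rfl
              intro j _
              rw [show xd (k + 1 + (j : ℕ)) l
                = (A *ᵥ xd (k + (j : ℕ))) l + (B *ᵥ ud (k + (j : ℕ))) l from
                  congrFun (hstep j) l]
              ring
          _ = (∑ j, ν j * (A *ᵥ xd (k + (j : ℕ))) l)
              + (∑ j, ν j * (B *ᵥ ud (k + (j : ℕ))) l) := Finset.sum_add_distrib
          _ = (A *ᵥ (fun l => ∑ j, ν j * xd (k + (j : ℕ)) l)) l + (B *ᵥ us) l := by
              congr 1
              · exact (mulVec_comb A ν (fun j => xd (k + (j : ℕ))) l).symm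
              · rw [← mulVec_comb B ν (fun j => ud (k + (j : ℕ))) l]
                congr 1
                funext b
                exact huν k (by omega) b
      have hzeq : ∀ i' : ℕ, i' ≤ n →
          (fun l => ∑ j, ν j * xd (i' + (j : ℕ)) l) = xe i' := by
        intro i'
        induction i' with
        | zero => intro _; exact hz0
        | succ k ihk =>
          intro hk1
          rw [hzrec k (by omega), ihk (by omega)]
          exact (hxe k (by omega)).symm
      have hyw : ∀ j : Fin (N - (n + 1) + 1),
          yd ((i : ℕ) + (j : ℕ))
          = C *ᵥ xd ((i : ℕ) + (j : ℕ)) + D *ᵥ ud ((i : ℕ) + (j : ℕ)) := by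
        intro j
        apply hyd
        have h1 := j.isLt
        have h2 := i.isLt
        omega
      calc (hankel (n + 1) N yd).mulVec ν (i, a)
          = ∑ j : Fin (N - (n + 1) + 1), yd ((i : ℕ) + (j : ℕ)) a * ν j := rfl
        _ = ∑ j, (ν j * (C *ᵥ xd ((i : ℕ) + (j : ℕ))) a
              + ν j * (D *ᵥ ud ((i : ℕ) + (j : ℕ))) a) := by
            apply Finset.sum_congr rfl
            intro j _
            rw [show yd ((i : ℕ) + (j : ℕ)) a
              = (C *ᵥ xd ((i : ℕ) + (j : ℕ))) a + (D *ᵥ ud ((i : ℕ) + (j : ℕ))) a from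
                congrFun (hyw j) a]
            ring
        _ = (∑ j, ν j * (C *ᵥ xd ((i : ℕ) + (j : ℕ))) a)
            + (∑ j, ν j * (D *ᵥ ud ((i : ℕ) + (j : ℕ))) a) := Finset.sum_add_distrib
        _ = (C *ᵥ (fun l => ∑ j, ν j * xd ((i : ℕ) + (j : ℕ)) l)) a + (D *ᵥ us) a := by
            congr 1
            · exact (mulVec_comb C ν (fun j => xd ((i : ℕ) + (j : ℕ))) a).symm
            · rw [← mulVec_comb D ν (fun j => ud ((i : ℕ) + (j : ℕ))) a]
              congr 1
              funext b
              exact huν (i : ℕ) i.isLt b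
        _ = (C *ᵥ xe (i : ℕ)) a + (D *ᵥ us) a := by
            rw [hzeq (i : ℕ) (by have := i.isLt; omega)]
        _ = ys a := (congrFun (hye (i : ℕ) i.isLt) a).symm
  · rintro ⟨ν, hu, hy⟩
    have hus : ∀ k : ℕ, k < n + 1 → ∀ b, (∑ j, ν j * ud (k + (j : ℕ)) b) = us b := by
      intro k hk b
      have h1 : (∑ j : Fin (N - (n + 1) + 1), ud (k + (j : ℕ)) b * ν j) = us b := hu ⟨k, hk⟩ b
      rw [← h1]
      apply Finset.sum_congr rfl
      intro j _
      ring
    refine ⟨fun k l => ∑ j, ν j * xd (k + (j : ℕ)) l, ?_, ?_⟩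
    · intro k hk
      funext l
      have hstep : ∀ j : Fin (N - (n + 1) + 1),
          xd (k + 1 + (j : ℕ)) = A *ᵥ xd (k + (j : ℕ)) + B *ᵥ ud (k + (j : ℕ)) := by
        intro j
        have hjv : (j : ℕ) < N - (n + 1) + 1 := j.isLt
        rw [show k + 1 + (j : ℕ) = (k + (j : ℕ)) + 1 by omega]
        exact hxd _ (by omega)
      calc (∑ j, ν j * xd (k + 1 + (j : ℕ)) l)
          = ∑ j, (ν j * (A *ᵥ xd (k + (j : ℕ))) l + ν j * (B *ᵥ ud (k + (j : ℕ))) l) := by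
            apply Finset.sum_congr rfl
            intro j _
            rw [show xd (k + 1 + (j : ℕ)) l
              = (A *ᵥ xd (k + (j : ℕ))) l + (B *ᵥ ud (k + (j : ℕ))) l from
                congrFun (hstep j) l]
            ring
        _ = (∑ j, ν j * (A *ᵥ xd (k + (j : ℕ))) l)
            + (∑ j, ν j * (B *ᵥ ud (k + (j : ℕ))) l) := Finset.sum_add_distrib
        _ = (A *ᵥ (fun l => ∑ j, ν j * xd (k + (j : ℕ)) l)) l + (B *ᵥ us) l := by
            congr 1
            · exact (mulVec_comb A ν (fun j => xd (k + (j : ℕ))) l).symm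
            · rw [← mulVec_comb B ν (fun j => ud (k + (j : ℕ))) l]
              congr 1
              funext b
              exact hus k (by omega) b
    · intro k hk
      funext a
      have hyw : ∀ j : Fin (N - (n + 1) + 1),
          yd (k + (j : ℕ)) = C *ᵥ xd (k + (j : ℕ)) + D *ᵥ ud (k + (j : ℕ)) := by
        intro j
        apply hyd
        have h1 := j.isLt
        omega
      calc ys a = ∑ j : Fin (N - (n + 1) + 1), yd (k + (j : ℕ)) a * ν j := (hy ⟨k, hk⟩ a).symm
        _ = ∑ j, (ν j * (C *ᵥ xd (k + (j : ℕ))) a + ν j * (D *ᵥ ud (k + (j : ℕ))) a) := by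
            apply Finset.sum_congr rfl
            intro j _
            rw [show yd (k + (j : ℕ)) a
              = (C *ᵥ xd (k + (j : ℕ))) a + (D *ᵥ ud (k + (j : ℕ))) a from
                congrFun (hyw j) a]
            ring
        _ = (∑ j, ν j * (C *ᵥ xd (k + (j : ℕ))) a)
            + (∑ j, ν j * (D *ᵥ ud (k + (j : ℕ))) a) := Finset.sum_add_distrib
        _ = (C *ᵥ (fun l => ∑ j, ν j * xd (k + (j : ℕ)) l)) a + (D *ᵥ us) a := by
            congr 1
            · exact (mulVec_comb C ν (fun j => xd (k + (j : ℕ))) a).symm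
            · rw [← mulVec_comb D ν (fun j => ud (k + (j : ℕ))) a]
              congr 1
              funext b
              exact hus k hk b
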